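/- Let Θ ⊆ ℝ^N be a connected topological space and M : Θ → ℝ^{d×d} a continuous family of Metzler matrices. Suppose there exists θ* ∈ Θ with M(θ*) Hurwitz stable, and (-1)^d det(M(θ)) > 0 for all θ ∈ Θ. Then M(θ) is Hurwitz stable for every θ ∈ Θ. -/

import Mathlib

open Matrix Filter

def Metzler {d : ℕ} (M : Matrix (Fin d) (Fin d) ℝ) : Prop :=
  ∀ i j, i ≠ j → 0 ≤ M i j

def HurwitzStable {d : ℕ} (M : Matrix (Fin d) (Fin d) ℝ) : Prop :=
  ∀ μ ∈ spectrum ℂ (M.map Complex.ofReal), μ.re < 0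

lemma hurwitz_of_cert {d : ℕ} {M : Matrix (Fin d) (Fin d) ℝ} (hM : Metzler M)
    {v : Fin d → ℝ} (hv : ∀ i, 0 < v i) (hMv : ∀ i, M.mulVec v i < 0) :
    HurwitzStable M := by
  intro μ hμ
  set Mc : Matrix (Fin d) (Fin d) ℂ := M.map Complex.ofReal with hMc
  have hdet : (Matrix.scalar (Fin d) μ - Mc).det = 0 := by
    by_contra h
    exact (spectrum.mem_iff.mp hμ) ((Matrix.isUnit_iff_isUnit_det _).mpr (isUnit_iff_ne_zero.mpr h))
  obtain ⟨w, hw0, hww⟩ := (Matrix.exists_mulVec_eq_zero_iff).mpr hdet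
  have hweig : Mc.mulVec w = μ • w := by
    have h1 : (Matrix.scalar (Fin d) μ - Mc).mulVec w = μ • w - Mc.mulVec w := by
      rw [Matrix.sub_mulVec]
      congr 1
      ext i
      simp [Matrix.scalar, Matrix.mulVec_diagonal]
    rw [h1] at hww
    exact (sub_eq_zero.mp hww).symm
  -- conjugated matrix
  set vn : Fin d → ℂ := fun i => Complex.ofReal (v i) with hvn
  have hvne : ∀ i, vn i ≠ 0 := fun i => by
    simp [hvn, Complex.ofReal_ne_zero]; exact (hv i).ne'
  set Nn : Matrix (Fin d) (Fin d) ℂ := fun i j => (vn i)⁻¹ * Mc i j * vn j with hNn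
  set u : Fin d → ℂ := fun i => (vn i)⁻¹ * w i with hu
  have hueig : Matrix.toLin' Nn u = μ • u := by
    ext i
    rw [Matrix.toLin'_apply]
    simp only [Matrix.toLin'_apply, Matrix.mulVec, dotProduct, hNn, hu]
    have : ∑ j, (vn i)⁻¹ * Mc i j * vn j * ((vn j)⁻¹ * w j)
        = (vn i)⁻¹ * ∑ j, Mc i j * w j := by
      rw [Finset.mul_sum]
      refine Finset.sum_congr rfl fun j _ => ?_
      calc (vn i)⁻¹ * Mc i j * vn j * ((vn j)⁻¹ * w j)
          = (vn i)⁻¹ * (Mc i j * w j) * (vn j * (vn j)⁻¹) := by ring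
        _ = (vn i)⁻¹ * (Mc i j * w j) := by rw [mul_inv_cancel₀ (hvne j), mul_one]
    rw [this]
    have : ∑ j, Mc i j * w j = μ * w i := by
      have := congrFun hweig i
      simpa [Matrix.mulVec, dotProduct] using this
    rw [this]
    simp [Pi.smul_apply, smul_eq_mul]
    ring
  have hune : u ≠ 0 := by
    intro h
    apply hw0
    ext i
    have := congrFun h i
    simp only [hu, Pi.zero_apply, mul_eq_zero] at this
    rcases this with h' | h'
    · exact absurd h' (inv_ne_zero (hvne i))
    · simp [h']
  have heig : Module.End.HasEigenvalue (Matrix.toLin' Nn) μ :=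
    Module.End.hasEigenvalue_of_hasEigenvector
      ⟨Module.End.mem_eigenspace_iff.mpr hueig, hune⟩
  obtain ⟨k, hk⟩ := eigenvalue_mem_ball heig
  rw [Metric.mem_closedBall, dist_eq_norm] at hk
  -- compute entries
  have hNkk : Nn k k = Complex.ofReal (M k k) := by
    simp only [hNn, hMc, Matrix.map_apply]
    field_simp [hvne k]
  have hNkj : ∀ j, j ≠ k → ‖Nn k j‖ = (v k)⁻¹ * M k j * v j := by
    intro j hj
    have : Nn k j = Complex.ofReal ((v k)⁻¹ * M k j * v j) := by
      simp [hNn, hMc, hvn, Matrix.map_apply, Complex.ofReal_mul, Complex.ofReal_inv]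
    rw [this, Complex.norm_real]
    have h0 : 0 ≤ (v k)⁻¹ * M k j * v j :=
      mul_nonneg (mul_nonneg (inv_nonneg.mpr (hv k).le) (hM k j (Ne.symm hj))) (hv j).le
    exact Real.norm_of_nonneg h0
  have hsum : ∑ j ∈ Finset.univ.erase k, ‖Nn k j‖
      = (v k)⁻¹ * ∑ j ∈ Finset.univ.erase k, M k j * v j := by
    rw [Finset.mul_sum]
    refine Finset.sum_congr rfl fun j hj => ?_
    rw [hNkj j (Finset.ne_of_mem_erase hj)]
    ring
  have hre : μ.re - M k k ≤ ‖μ - Nn k k‖ := by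
    calc μ.re - M k k = (μ - Nn k k).re := by rw [hNkk]; simp
    _ ≤ ‖μ - Nn k k‖ := Complex.re_le_norm _
  have hfinal : μ.re ≤ (v k)⁻¹ * (M.mulVec v k) := by
    have h1 : μ.re ≤ M k k + (v k)⁻¹ * ∑ j ∈ Finset.univ.erase k, M k j * v j := by
      have := hk.trans_eq hsum
      linarith [hre.trans this]
    have h2 : M.mulVec v k = M k k * v k + ∑ j ∈ Finset.univ.erase k, M k j * v j := by
      simp only [Matrix.mulVec, dotProduct]
      rw [← Finset.add_sum_erase _ _ (Finset.mem_univ k)]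
    rw [h2, mul_add]
    have : (v k)⁻¹ * (M k k * v k) = M k k := by
      field_simp
      exact mul_div_cancel_left₀ (M k k) (hv k).ne'
    rw [this]
    exact h1
  have : (v k)⁻¹ * (M.mulVec v k) < 0 :=
    mul_neg_of_pos_of_neg (inv_pos.mpr (hv k)) (hMv k)
  linarith

section PowBound
attribute [local instance] Matrix.linftyOpNormedRing Matrix.linftyOpNormedAlgebra

lemma matrix_entry_le_linfty {d : ℕ} (B : Matrix (Fin d) (Fin d) ℂ) (i j : Fin d) :
    ‖B i j‖ ≤ ‖B‖ := by
  have h1 : ‖B i j‖₊ ≤ ‖B‖₊ := by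
    rw [Matrix.linfty_opNNNorm_def]
    exact le_trans (Finset.single_le_sum (f := fun k => ‖B i k‖₊)
      (fun k _ => zero_le) (Finset.mem_univ j))
      (Finset.le_sup (f := fun i => ∑ j, ‖B i j‖₊) (Finset.mem_univ i))
  exact_mod_cast h1

lemma entry_pow_bound {d : ℕ} (B : Matrix (Fin d) (Fin d) ℂ) {c : ℝ}
    (hc : 0 < c) (hspec : ∀ μ ∈ spectrum ℂ B, ‖μ‖ < c) :
    ∃ r : ℝ, 0 ≤ r ∧ r < c ∧ ∃ n₀ : ℕ, ∀ n ≥ n₀, ∀ i j, ‖(B ^ n) i j‖ ≤ r ^ n := by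
  -- a bound r₀ < c on the spectrum
  obtain ⟨r₀, hr₀0, hr₀c, hr₀⟩ : ∃ r₀, 0 ≤ r₀ ∧ r₀ < c ∧ ∀ μ ∈ spectrum ℂ B, ‖μ‖ ≤ r₀ := by
    rcases Set.eq_empty_or_nonempty (spectrum ℂ B) with h | h
    · exact ⟨0, le_refl 0, hc, by simp [h]⟩
    · obtain ⟨μ₀, hμ₀, hmax⟩ := (spectrum.isCompact B).exists_isMaxOn h
        (continuous_norm.continuousOn)
      exact ⟨‖μ₀‖, norm_nonneg _, hspec _ hμ₀, fun μ hμ => hmax hμ⟩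
  set r : ℝ := (r₀ + c) / 2 with hr
  have hr0 : 0 < r := by positivity
  have hrc : r < c := by simp only [hr]; linarith
  have hr₀r : r₀ < r := by simp only [hr]; linarith
  refine ⟨r, hr0.le, hrc, ?_⟩
  have hsr : spectralRadius ℂ B < ENNReal.ofReal r := by
    rw [spectralRadius]
    refine lt_of_le_of_lt (b := (r₀.toNNReal : ENNReal)) (iSup₂_le fun μ hμ => ?_) ?_
    · exact ENNReal.coe_le_coe.mpr ((Real.le_toNNReal_iff_coe_le hr₀0).mpr
        (by simpa using hr₀ μ hμ))
    · rw [ENNReal.ofReal]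
      exact ENNReal.coe_lt_coe.mpr ((Real.toNNReal_lt_toNNReal_iff hr0).mpr hr₀r)
  have hgel := spectrum.pow_nnnorm_pow_one_div_tendsto_nhds_spectralRadius B
  have hev : ∀ᶠ n : ℕ in atTop, (‖B ^ n‖₊ : ENNReal) ^ (1 / (n:ℝ)) < ENNReal.ofReal r :=
    hgel.eventually_lt_const hsr
  rw [Filter.eventually_atTop] at hev
  obtain ⟨n₁, hn₁⟩ := hev
  refine ⟨max n₁ 1, fun n hn i j => ?_⟩
  have hn1 : 1 ≤ n := le_trans (le_max_right _ _) hn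
  have hnn : (0:ℝ) < n := by exact_mod_cast hn1
  have h := hn₁ n (le_trans (le_max_left _ _) hn)
  have h2 : ((‖B ^ n‖₊ : ENNReal) ^ (1 / (n:ℝ))) ^ (n:ℝ) < (ENNReal.ofReal r) ^ (n:ℝ) :=
    ENNReal.rpow_lt_rpow h hnn
  rw [← ENNReal.rpow_mul, one_div, inv_mul_cancel₀ hnn.ne', ENNReal.rpow_one,
    ENNReal.rpow_natCast] at h2
  have h3 : ‖B ^ n‖ ≤ r ^ n := by
    have := h2.le
    rw [← ENNReal.ofReal_pow hr0.le] at this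
    have h4 := ENNReal.toReal_mono (by simp) this
    simpa [ENNReal.toReal_ofReal (by positivity : (0:ℝ) ≤ r ^ n)] using h4
  exact le_trans (matrix_entry_le_linfty _ i j) h3

end PowBound

section SpecCompact
attribute [local instance] Matrix.linftyOpNormedRing Matrix.linftyOpNormedAlgebra

lemma spec_compact {d : ℕ} (B : Matrix (Fin d) (Fin d) ℂ) : IsCompact (spectrum ℂ B) :=
  spectrum.isCompact B

end SpecCompact

lemma pow_entry_nonneg {d : ℕ} {A : Matrix (Fin d) (Fin d) ℝ}
    (hA : ∀ i j, 0 ≤ A i j) : ∀ n, ∀ i j, 0 ≤ (A ^ n) i j := by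
  intro n
  induction n with
  | zero => intro i j; by_cases h : i = j <;> simp [pow_zero, Matrix.one_apply, h]
  | succ m ih =>
    intro i j
    rw [pow_succ, Matrix.mul_apply]
    exact Finset.sum_nonneg fun k _ => mul_nonneg (ih i k) (hA k j)

set_option maxHeartbeats 2000000 in
lemma neg_inv_nonneg_of_hurwitz {d : ℕ} {M : Matrix (Fin d) (Fin d) ℝ}
    (hM : Metzler M) (hH : HurwitzStable M) :
    IsUnit M.det ∧ ∀ i j, 0 ≤ (-M⁻¹) i j := by
  set Mc : Matrix (Fin d) (Fin d) ℂ := M.map Complex.ofReal with hMc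
  -- choose c
  obtain ⟨c, hc0, hcdiag, hcspec⟩ : ∃ c : ℝ, 0 < c ∧ (∀ i, 0 ≤ M i i + c) ∧
      ∀ μ ∈ spectrum ℂ Mc, ‖μ + c‖ < c := by
    have hcomp := spec_compact Mc
    set c₀ : ℝ := 1 + ∑ i, |M i i| with hc₀
    have hc₀diag : ∀ i, 0 ≤ M i i + c₀ := by
      intro i
      have h1 : |M i i| ≤ ∑ j, |M j j| :=
        Finset.single_le_sum (f := fun j => |M j j|) (fun j _ => abs_nonneg _) (Finset.mem_univ i)
      have h2 : -M i i ≤ |M i i| := neg_le_abs _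
      simp only [hc₀]; linarith
    have hc₀pos : 0 < c₀ := by
      have : 0 ≤ ∑ i, |M i i| := Finset.sum_nonneg fun i _ => abs_nonneg _
      simp only [hc₀]; linarith
    rcases Set.eq_empty_or_nonempty (spectrum ℂ Mc) with hσ | hσ
    · exact ⟨c₀, hc₀pos, hc₀diag, by simp [hσ]⟩
    · -- maximize g μ = ‖μ‖^2 / (-(2*μ.re)) over the spectrum
      have hg : ContinuousOn (fun μ : ℂ => ‖μ‖^2 / (-(2*μ.re))) (spectrum ℂ Mc) := by
        apply ContinuousOn.div
        · exact (continuous_norm.pow 2).continuousOn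
        · exact (continuous_neg.comp (continuous_const.mul Complex.continuous_re)).continuousOn
        · intro μ hμ
          have := hH μ hμ
          simp only [neg_ne_zero]
          nlinarith
      obtain ⟨μ₀, hμ₀, hmax⟩ := hcomp.exists_isMaxOn hσ hg
      set K : ℝ := ‖μ₀‖^2 / (-(2*μ₀.re)) with hK
      refine ⟨max c₀ (K + 1), lt_of_lt_of_le hc₀pos (le_max_left _ _), ?_, ?_⟩
      · intro i
        have := hc₀diag i
        have := le_max_left c₀ (K+1)
        linarith
      · intro μ hμ
        set c := max c₀ (K + 1) with hc
        have hre : μ.re < 0 := hH μ hμ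
        have hKμ : ‖μ‖^2 / (-(2*μ.re)) ≤ K := hmax hμ
        have hcK : K + 1 ≤ c := le_max_right _ _
        have hcgt : ‖μ‖^2 / (-(2*μ.re)) < c := by linarith
        have hden : 0 < -(2*μ.re) := by linarith
        have hmain : ‖μ‖^2 + 2*c*μ.re < 0 := by
          have := (div_lt_iff₀ hden).mp hcgt
          nlinarith
        have hcpos : (0:ℝ) < c := lt_of_lt_of_le hc₀pos (le_max_left _ _)
        have hsq : ‖μ + (c:ℂ)‖^2 < c^2 := by
          have h1 : ‖μ + (c:ℂ)‖^2 = (μ.re + c)^2 + μ.im^2 := by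
            rw [Complex.sq_norm, Complex.normSq_apply]
            simp
            ring
          have h2 : ‖μ‖^2 = μ.re^2 + μ.im^2 := by
            rw [Complex.sq_norm, Complex.normSq_apply]
            ring
          nlinarith
        nlinarith [norm_nonneg (μ + (c:ℂ))]
  -- the nonnegative shift A = M + c•1
  set A : Matrix (Fin d) (Fin d) ℝ := M + c • (1 : Matrix (Fin d) (Fin d) ℝ) with hA
  have hAnn : ∀ i j, 0 ≤ A i j := by
    intro i j
    by_cases h : i = j
    · subst h; simpa [hA, Matrix.one_apply] using hcdiag i
    · simpa [hA, Matrix.one_apply, h] using hM i j h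
  have hAc : A.map Complex.ofReal = Mc + (c:ℂ) • (1 : Matrix (Fin d) (Fin d) ℂ) := by
    ext i j
    by_cases h : i = j <;>
      simp [hA, hMc, Matrix.map_apply, Matrix.one_apply, h, Complex.ofReal_add]
  -- spectrum of A.map ofReal is inside the ball of radius c
  have hspecA : ∀ μ' ∈ spectrum ℂ (A.map Complex.ofReal), ‖μ'‖ < c := by
    intro μ' hμ'
    have hsh : μ' - c ∈ spectrum ℂ Mc := by
      rw [spectrum.mem_iff] at hμ' ⊢
      intro hu
      apply hμ'
      convert hu using 1
      rw [hAc]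
      rw [Algebra.algebraMap_eq_smul_one, Algebra.algebraMap_eq_smul_one]
      rw [sub_smul]
      abel
    have := hcspec _ hsh
    simpa using this
  obtain ⟨r, hr0, hrc, n₀, hbound⟩ := entry_pow_bound (A.map Complex.ofReal) hc0 hspecA
  -- real entrywise bound
  have hpow : ∀ n ≥ n₀, ∀ i j, (A ^ n) i j ≤ r ^ n := by
    intro n hn i j
    have h1 := hbound n hn i j
    have h2 : (A.map Complex.ofReal) ^ n = (A ^ n).map Complex.ofReal := by
      have := map_pow (Complex.ofRealHom.mapMatrix (m := Fin d)) A n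
      exact this.symm
    rw [h2] at h1
    have h3 : ‖((A ^ n) i j : ℂ)‖ = |(A ^ n) i j| := Complex.norm_real _
    rw [Matrix.map_apply] at h1
    rw [h3] at h1
    exact (le_abs_self _).trans h1
  -- Neumann series
  set F : ℕ → Matrix (Fin d) (Fin d) ℝ := fun n => (c⁻¹)^(n+1) • A^n with hF
  have hFentry : ∀ n i j, F n i j = (c⁻¹)^(n+1) * (A^n) i j := by
    intro n i j; simp [hF]
  have hFnn : ∀ n i j, 0 ≤ F n i j := fun n i j => by
    rw [hFentry]
    exact mul_nonneg (by positivity) (pow_entry_nonneg hAnn n i j)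
  have hrc1 : r / c < 1 := by rwa [div_lt_one hc0]
  have hrcnn : 0 ≤ r / c := by positivity
  have hentry_sum : ∀ i j, Summable (fun n => F n i j) := by
    intro i j
    rw [← summable_nat_add_iff n₀]
    refine Summable.of_nonneg_of_le (fun n => hFnn _ i j) (fun n => ?_)
      ((summable_geometric_of_lt_one hrcnn hrc1).mul_left (c⁻¹^(n₀+1) * r^n₀))
    rw [hFentry]
    calc c⁻¹^(n + n₀ +1) * (A^(n + n₀)) i j ≤ c⁻¹^(n + n₀ + 1) * r^(n + n₀) :=
        mul_le_mul_of_nonneg_left (hpow _ (by omega) i j) (by positivity)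
      _ = (c⁻¹^(n₀+1) * r^n₀) * (r/c)^n := by
        rw [div_pow, div_eq_mul_inv, ← inv_pow]
        ring
  have hsummable : Summable F := by
    refine Pi.summable.mpr ?_
    intro i
    rw [Pi.summable]
    intro j
    exact hentry_sum i j
  set T : Matrix (Fin d) (Fin d) ℝ := ∑' n, F n with hT
  have hTnn : ∀ i j, 0 ≤ T i j := by
    intro i j
    have hs1 : Summable (fun n => F n i) := by
      rw [Pi.summable]; intro j'; exact hentry_sum i j'
    have h1 : T i j = ∑' n, F n i j := by
      rw [hT]; exact (congrFun (tsum_apply hsummable) j).trans (tsum_apply hs1)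
    rw [h1]
    exact tsum_nonneg fun n => hFnn n i j
  -- telescoping identity
  have hcA : c • (1 : Matrix (Fin d) (Fin d) ℝ) - A = -M := by
    rw [hA]; abel
  have key : ∀ m : ℕ, (-M) * (∑ n ∈ Finset.range m, F n) = 1 - (c⁻¹)^m • A^m := by
    intro m
    rw [← hcA]
    induction m with
    | zero => simp
    | succ k ih =>
      rw [Finset.sum_range_succ, mul_add, ih]
      have hstep : (c • (1 : Matrix (Fin d) (Fin d) ℝ) - A) * F k
          = (c⁻¹)^k • A^k - (c⁻¹)^(k+1) • A^(k+1) := by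
        simp only [hF]
        rw [sub_mul, Matrix.smul_mul, Matrix.one_mul, Matrix.mul_smul, smul_smul]
        have hcc : c * (c⁻¹)^(k+1) = (c⁻¹)^k := by
          rw [pow_succ']
          field_simp
        rw [hcc, ← pow_succ']
      rw [hstep]
      abel
  -- limits
  have hlim1 : Tendsto (fun m => ∑ n ∈ Finset.range m, F n) atTop (nhds T) :=
    hsummable.hasSum.tendsto_sum_nat
  have hlim0 : Tendsto (fun m : ℕ => (c⁻¹)^m • A^m) atTop
      (nhds (0 : Matrix (Fin d) (Fin d) ℝ)) := by
    refine tendsto_pi_nhds.mpr ?_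
    intro i
    rw [tendsto_pi_nhds]
    intro j
    simp only [Matrix.smul_apply, smul_eq_mul, Pi.zero_apply, Matrix.zero_apply]
    apply squeeze_zero_norm' (a := fun m : ℕ => (r/c)^m)
    · rw [Filter.eventually_atTop]
      refine ⟨n₀, fun m hm => ?_⟩
      have h1 : 0 ≤ (c⁻¹)^m * (A^m) i j :=
        mul_nonneg (by positivity) (pow_entry_nonneg hAnn m i j)
      rw [Real.norm_of_nonneg h1, div_pow, div_eq_mul_inv, ← inv_pow, mul_comm]
      exact mul_le_mul_of_nonneg_right (hpow m hm i j) (by positivity)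
    · exact tendsto_pow_atTop_nhds_zero_of_lt_one hrcnn hrc1
  have hmulcont : Continuous (fun X : Matrix (Fin d) (Fin d) ℝ => (-M) * X) :=
    continuous_const.matrix_mul continuous_id
  have h1 : Tendsto (fun m => (-M) * (∑ n ∈ Finset.range m, F n)) atTop (nhds ((-M) * T)) :=
    (hmulcont.tendsto T).comp hlim1
  have h2 : Tendsto (fun m => (-M) * (∑ n ∈ Finset.range m, F n)) atTop
      (nhds (1 : Matrix (Fin d) (Fin d) ℝ)) := by
    simp only [key]
    have := (tendsto_const_nhds (x := (1 : Matrix (Fin d) (Fin d) ℝ)) (f := atTop (α := ℕ))).sub hlim0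
    simpa using this
  have hMT : (-M) * T = 1 := tendsto_nhds_unique h1 h2
  have hMT' : M * (-T) = 1 := by
    rw [Matrix.mul_neg, ← Matrix.neg_mul, hMT]
  have hunit : IsUnit M.det := by
    apply IsUnit.of_mul_eq_one (-T).det
    rw [← Matrix.det_mul, hMT', Matrix.det_one]
  have hinv : M⁻¹ = -T := Matrix.inv_eq_right_inv hMT'
  refine ⟨hunit, fun i j => ?_⟩
  rw [hinv, neg_neg]
  exact hTnn i j

lemma cert_of_neg_inv {d : ℕ} {M : Matrix (Fin d) (Fin d) ℝ} (hM : Metzler M)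
    (hu : IsUnit M.det) (hinv : ∀ i j, 0 ≤ (-M⁻¹) i j) :
    ∃ v : Fin d → ℝ, (∀ i, 0 < v i) ∧ ∀ i, M.mulVec v i < 0 := by
  set v : Fin d → ℝ := (-M⁻¹).mulVec (fun _ => 1) with hv
  have hMv : M.mulVec v = fun _ => -1 := by
    rw [hv, Matrix.mulVec_mulVec, Matrix.mul_neg, Matrix.mul_nonsing_inv _ hu]
    ext i
    simp [Matrix.mulVec, dotProduct, Matrix.one_apply]
  have hvnn : ∀ i, 0 ≤ v i := by
    intro i
    rw [hv]
    simp only [Matrix.mulVec, dotProduct]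
    exact Finset.sum_nonneg fun j _ => by simpa using hinv i j
  have hvpos : ∀ i, 0 < v i := by
    intro i
    rcases (hvnn i).lt_or_eq with h | h
    · exact h
    · exfalso
      have h1 : M.mulVec v i = -1 := by rw [hMv]
      have h2 : 0 ≤ M.mulVec v i := by
        simp only [Matrix.mulVec, dotProduct]
        apply Finset.sum_nonneg
        intro j _
        by_cases hij : i = j
        · subst hij; rw [← h]; simp
        · exact mul_nonneg (hM i j hij) (hvnn j)
      linarith
  refine ⟨v, hvpos, fun i => by rw [hMv]; norm_num⟩

theorem stmt6 {N d : ℕ} (Θ : Set (Fin N → ℝ)) (hΘ : IsConnected Θ)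
    (M : (Fin N → ℝ) → Matrix (Fin d) (Fin d) ℝ) (hcont : ContinuousOn M Θ)
    (hMetz : ∀ θ ∈ Θ, Metzler (M θ))
    (hstab : ∃ θs ∈ Θ, HurwitzStable (M θs))
    (hdet : ∀ θ ∈ Θ, 0 < (-1 : ℝ) ^ d * (M θ).det) :
    ∀ θ ∈ Θ, HurwitzStable (M θ) := by
  classical
  obtain ⟨θs, hθs, hstabs⟩ := hstab
  have hdetne : ∀ θ ∈ Θ, (M θ).det ≠ 0 := by
    intro θ hθ h
    have := hdet θ hθ
    rw [h, mul_zero] at this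
    exact lt_irrefl 0 this
  haveI : ConnectedSpace Θ := isConnected_iff_connectedSpace.mp hΘ
  -- the continuous map x ↦ M x on the subtype
  have hf : Continuous (fun x : Θ => M (x : Fin N → ℝ)) := hcont.restrict
  have hdet' : ∀ x : Θ, (M (x : Fin N → ℝ)).det ≠ 0 := fun x => hdetne _ x.2
  have hfinv : Continuous (fun x : Θ => (M (x : Fin N → ℝ))⁻¹) := by
    have h1 : (fun x : Θ => (M (x : Fin N → ℝ))⁻¹)
        = fun x : Θ => ((M (x : Fin N → ℝ)).det)⁻¹ • (M (x : Fin N → ℝ)).adjugate := by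
      funext x
      rw [Matrix.inv_def, Ring.inverse_eq_inv']
    rw [h1]
    exact ((hf.matrix_det).inv₀ hdet').smul hf.matrix_adjugate
  set S : Set Θ := {x | ∀ i j, 0 ≤ (-(M (x : Fin N → ℝ))⁻¹) i j} with hS
  have hclosed : IsClosed S := by
    have h1 : S = ⋂ i, ⋂ j, {x : Θ | 0 ≤ (-(M (x : Fin N → ℝ))⁻¹) i j} := by
      ext x; simp [hS]
    rw [h1]
    refine isClosed_iInter fun i => isClosed_iInter fun j => ?_
    exact isClosed_le continuous_const ((hfinv.neg).matrix_elem i j)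
  have hopen : IsOpen S := by
    rw [isOpen_iff_mem_nhds]
    intro x hx
    obtain ⟨v, hvpos, hvlt⟩ := cert_of_neg_inv (hMetz _ x.2)
      (isUnit_iff_ne_zero.mpr (hdet' x)) hx
    have hU : IsOpen {y : Θ | ∀ i, (M (y : Fin N → ℝ)).mulVec v i < 0} := by
      have h2 : {y : Θ | ∀ i, (M (y : Fin N → ℝ)).mulVec v i < 0}
          = ⋂ i, {y : Θ | (M (y : Fin N → ℝ)).mulVec v i < 0} := by
        ext y; simp
      rw [h2]
      refine isOpen_iInter_of_finite fun i => ?_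
      have hcont2 : Continuous fun y : Θ => (M (y : Fin N → ℝ)).mulVec v i := by
        simp only [Matrix.mulVec, dotProduct]
        exact continuous_finset_sum _ fun j _ => (hf.matrix_elem i j).mul continuous_const
      exact isOpen_lt hcont2 continuous_const
    refine Filter.mem_of_superset (hU.mem_nhds (fun i => hvlt i)) ?_
    intro y hy
    have hH : HurwitzStable (M (y : Fin N → ℝ)) := hurwitz_of_cert (hMetz _ y.2) hvpos hy
    exact (neg_inv_nonneg_of_hurwitz (hMetz _ y.2) hH).2
  have hne : S.Nonempty := ⟨⟨θs, hθs⟩, (neg_inv_nonneg_of_hurwitz (hMetz _ hθs) hstabs).2⟩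
  have huniv : S = Set.univ := IsClopen.eq_univ ⟨hclosed, hopen⟩ hne
  intro θ hθ
  have hx : (⟨θ, hθ⟩ : Θ) ∈ S := huniv ▸ Set.mem_univ _
  obtain ⟨v, hvpos, hvlt⟩ := cert_of_neg_inv (hMetz _ hθ)
    (isUnit_iff_ne_zero.mpr (hdetne _ hθ)) hx
  exact hurwitz_of_cert (hMetz _ hθ) hvpos hvlt
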